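/- Let Z_t be a strictly stationary ergodic process with continuous strictly increasing marginal CDF G, and let F be a continuous strictly increasing CDF. If Y_t = F⁻¹(G(Z_t)) and the margin adjustment estimator is defined as F̃_T(x) = max_{1≤t≤T}{G(Z_t) : Y_t ≤ x}, then F̃_T(x) = max_{1≤t≤T}{U_t : U_t ≤ F(x)} where U_t = G(Z_t), and F̃_T(x) → F(x) almost surely for every x ∈ ℝ as T → ∞ (assuming F assigns positive mass to every left-neighborhood of x under the induced law). -/

import Mathlib

open MeasureTheory ProbabilityTheory Filter Set

/-- margin adjustment consistency, Theorem 1 of the paper: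
for a strictly stationary ergodic process `Z t = f ∘ S^[t]` with continuous
strictly increasing marginal CDF `G`, a continuous strictly increasing CDF `F`
with inverse `Finv`, and `Y t = Finv (G (Z t))`, the margin adjustment
`F̃_T(x) = max {G (Z t) : Y t ≤ x, t < T}` equals
`max {U t : U t ≤ F x, t < T}` where `U t = G (Z t)`, and converges a.s. to
`F x` for every `x`. -/
theorem stmt6
    {Ω : Type*} [MeasurableSpace Ω] (μ : Measure Ω) [IsProbabilityMeasure μ]
    (S : Ω → Ω) (hS : Ergodic S μ)
    (f : Ω → ℝ) (hf : Measurable f)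
    (Z : ℕ → Ω → ℝ) (hZ : ∀ t ω, Z t ω = f (S^[t] ω))
    (G : ℝ → ℝ) (hG : ∀ x, G x = (μ {ω | f ω ≤ x}).toReal)
    (hGc : Continuous G) (hGm : StrictMono G) (hGr : ∀ z, G z ∈ Set.Ioo (0:ℝ) 1)
    (F : ℝ → ℝ) (hFc : Continuous F) (hFm : StrictMono F)
    (hF0 : Tendsto F atBot (nhds 0)) (hF1 : Tendsto F atTop (nhds 1))
    (Finv : ℝ → ℝ) (hFinv1 : ∀ y, Finv (F y) = y)
    (hFinv2 : ∀ u ∈ Set.Ioo (0:ℝ) 1, F (Finv u) = u)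
    (Y : ℕ → Ω → ℝ) (hY : ∀ t ω, Y t ω = Finv (G (Z t ω)))
    (x : ℝ) :
    (∀ (T : ℕ) (ω : Ω),
      sSup {u : ℝ | ∃ t < T, G (Z t ω) = u ∧ Y t ω ≤ x}
        = sSup {u : ℝ | ∃ t < T, G (Z t ω) = u ∧ u ≤ F x}) ∧
    ∀ᵐ ω ∂μ, Tendsto
      (fun T : ℕ => sSup {u : ℝ | ∃ t < T, G (Z t ω) = u ∧ Y t ω ≤ x})
      atTop (nhds (F x)) := by
  -- the pointwise equivalence Y t ω ≤ x ↔ G (Z t ω) ≤ F x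
  have hiff : ∀ t ω, Y t ω ≤ x ↔ G (Z t ω) ≤ F x := by
    intro t ω
    rw [hY, ← hFm.le_iff_le, hFinv2 _ (hGr _)]
  have hset : ∀ (T : ℕ) (ω : Ω), {u : ℝ | ∃ t < T, G (Z t ω) = u ∧ Y t ω ≤ x}
      = {u : ℝ | ∃ t < T, G (Z t ω) = u ∧ u ≤ F x} := by
    intro T ω
    ext u
    constructor
    · rintro ⟨t, ht, rfl, h⟩; exact ⟨t, ht, rfl, (hiff t ω).mp h⟩
    · rintro ⟨t, ht, rfl, h⟩; exact ⟨t, ht, rfl, (hiff t ω).mpr h⟩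
  refine ⟨fun T ω => by rw [hset], ?_⟩
  -- 0 < F x < 1
  have hFx1 : F x < 1 :=
    lt_of_lt_of_le (hFm (lt_add_one x)) (hFm.monotone.ge_of_tendsto hF1 (x + 1))
  have hFx0 : 0 < F x :=
    lt_of_le_of_lt (hFm.monotone.le_of_tendsto hF0 (x - 1)) (hFm (sub_one_lt x))
  -- limits of G
  have hGtop : Tendsto (fun n : ℕ => G (n : ℝ)) atTop (nhds 1) := by
    have h1 : Tendsto (fun n : ℕ => μ {ω | f ω ≤ (n : ℝ)}) atTop (nhds (μ univ)) := by
      have hu : (⋃ n : ℕ, {ω | f ω ≤ (n : ℝ)}) = univ := by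
        ext ω; simp only [mem_iUnion, mem_univ, iff_true, mem_setOf_eq]
        obtain ⟨n, hn⟩ := exists_nat_ge (f ω); exact ⟨n, hn⟩
      have := tendsto_measure_iUnion_atTop (μ := μ)
        (s := fun n : ℕ => {ω | f ω ≤ (n : ℝ)})
        (fun n m hnm ω hω => by
          simp only [Set.mem_setOf_eq] at hω ⊢
          have h : (n : ℝ) ≤ (m : ℝ) := by exact_mod_cast hnm
          linarith)
      rwa [hu] at this
    have h2 : Tendsto (fun n : ℕ => (μ {ω | f ω ≤ (n : ℝ)}).toReal) atTop
        (nhds ((μ univ).toReal)) :=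
      (ENNReal.tendsto_toReal (measure_ne_top μ _)).comp h1
    simp only [measure_univ, ENNReal.toReal_one] at h2
    simpa only [← hG] using h2
  have hGbot : Tendsto (fun n : ℕ => G (-(n : ℝ))) atTop (nhds 0) := by
    have hant : Antitone (fun n : ℕ => {ω | f ω ≤ -(n : ℝ)}) := by
      intro n m hnm ω hω
      simp only [Set.mem_setOf_eq] at hω ⊢
      have h : (n : ℝ) ≤ (m : ℝ) := by exact_mod_cast hnm
      linarith
    have h1 := tendsto_measure_iInter_atTop (μ := μ)
      (s := fun n : ℕ => {ω | f ω ≤ -(n : ℝ)})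
      (fun n => (hf measurableSet_Iic).nullMeasurableSet) hant ⟨0, measure_ne_top μ _⟩
    have he : (⋂ n : ℕ, {ω | f ω ≤ -(n : ℝ)}) = ∅ := by
      ext ω; simp only [mem_iInter, mem_empty_iff_false, iff_false, not_forall, mem_setOf_eq]
      obtain ⟨n, hn⟩ := exists_nat_gt (-(f ω))
      exact ⟨n, by push_neg; linarith⟩
    rw [he, measure_empty] at h1
    have h2 : Tendsto (fun n : ℕ => (μ {ω | f ω ≤ -(n : ℝ)}).toReal) atTop
        (nhds ((0 : ENNReal)).toReal) :=
      (ENNReal.tendsto_toReal (by simp)).comp h1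
    simpa only [← hG, ENNReal.toReal_zero] using h2
  -- G attains the value F x
  obtain ⟨z₀, hz₀⟩ : ∃ z₀, G z₀ = F x := by
    obtain ⟨n, hn⟩ := (hGbot.eventually_lt_const hFx0).exists
    obtain ⟨m, hm⟩ := (hGtop.eventually_const_lt hFx1).exists
    have hab : (-(n : ℝ)) < (m : ℝ) := hGm.lt_iff_lt.mp (hn.trans hm)
    obtain ⟨z₀, _, hz₀⟩ := intermediate_value_Icc hab.le hGc.continuousOn
      ⟨hn.le, hm.le⟩
    exact ⟨z₀, hz₀⟩
  -- key recurrence lemma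
  have key : ∀ ε : ℝ, 0 < ε →
      ∀ᵐ ω ∂μ, ∃ n : ℕ, F x - ε < G (Z n ω) ∧ G (Z n ω) ≤ F x := by
    intro ε hε
    -- choose z₁ < z₀ with F x - ε < G z₁
    obtain ⟨z₁, hz₁gt, hz₁lt⟩ : ∃ z₁, F x - ε < G z₁ ∧ z₁ < z₀ := by
      have h1 : ∀ᶠ z in nhds z₀, F x - ε < G z :=
        (hGc.continuousAt (x := z₀)).eventually_const_lt (by rw [hz₀]; linarith)
      have h2 : ∀ᶠ z in nhdsWithin z₀ (Iio z₀), F x - ε < G z :=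
        h1.filter_mono nhdsWithin_le_nhds
      exact (h2.and eventually_mem_nhdsWithin).exists
    set A : Set Ω := f ⁻¹' (Ioc z₁ z₀) with hA
    have hAm : MeasurableSet A := hf measurableSet_Ioc
    have hAeq : A = f ⁻¹' (Iic z₀) \ f ⁻¹' (Iic z₁) := by
      rw [hA, ← preimage_diff, Iic_sdiff_Iic]
    have hμA : μ A ≠ 0 := by
      intro h0
      have hsub : f ⁻¹' (Iic z₁) ⊆ f ⁻¹' (Iic z₀) :=
        preimage_mono (Iic_subset_Iic.mpr hz₁lt.le)
      have hd : μ A = μ (f ⁻¹' (Iic z₀)) - μ (f ⁻¹' (Iic z₁)) := by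
        rw [hAeq, measure_diff hsub (hf measurableSet_Iic).nullMeasurableSet
          (measure_ne_top μ _)]
      have ht : (μ A).toReal = G z₀ - G z₁ := by
        rw [hd, ENNReal.toReal_sub_of_le (measure_mono hsub) (measure_ne_top μ _),
          hG z₀, hG z₁]
        rfl
      rw [h0, ENNReal.toReal_zero] at ht
      have := hGm hz₁lt
      linarith
    -- ergodicity: almost every point visits A
    set B : Set Ω := ⋃ n : ℕ, (S^[n]) ⁻¹' A with hB
    have hSm : Measurable S := hS.measurable
    have hBm : MeasurableSet B :=
      MeasurableSet.iUnion fun n => (hSm.iterate n) hAm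
    have hpre : S ⁻¹' B = ⋃ n : ℕ, (S^[n + 1]) ⁻¹' A := by
      rw [hB, preimage_iUnion]
      refine iUnion_congr fun n => ?_
      rw [Function.iterate_succ, preimage_comp]
    have hpre_sub : S ⁻¹' B ⊆ B := by
      rw [hpre]; exact iUnion_subset fun n => subset_iUnion
        (fun n : ℕ => (S^[n]) ⁻¹' A) (n + 1)
    have hmeq : μ (S ⁻¹' B) = μ B :=
      hS.toMeasurePreserving.measure_preimage hBm.nullMeasurableSet
    have hae : S ⁻¹' B =ᵐ[μ] B :=
      ae_eq_of_subset_of_measure_ge hpre_sub hmeq.ge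
        ((hSm hBm).nullMeasurableSet) (measure_ne_top μ _)
    have := hS.quasiErgodic.ae_empty_or_univ₀ hBm.nullMeasurableSet hae
    have hBuniv : B =ᵐ[μ] univ := by
      rcases this with h | h
      · exfalso
        apply hμA
        have hAB : A ⊆ B := by
          intro ω hω
          exact mem_iUnion.mpr ⟨0, by simpa using hω⟩
        have : μ B = 0 := by
          rw [measure_congr h, measure_empty]
        exact le_antisymm (le_trans (measure_mono hAB) this.le) zero_le
      · exact h
    have : ∀ᵐ ω ∂μ, ω ∈ B := by
      have h := ae_eq_univ.mp hBuniv
      rw [ae_iff]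
      exact h
    filter_upwards [this] with ω hω
    obtain ⟨n, hn⟩ := mem_iUnion.mp hω
    refine ⟨n, ?_, ?_⟩
    · rw [hZ]
      calc F x - ε < G z₁ := hz₁gt
        _ ≤ G (f (S^[n] ω)) := hGm.monotone (mem_preimage.mp hn).1.le
    · rw [hZ, ← hz₀]
      exact hGm.monotone (mem_preimage.mp hn).2
  -- combine over ε = 1/(k+1)
  have key' : ∀ᵐ ω ∂μ, ∀ k : ℕ,
      ∃ n : ℕ, F x - 1 / (k + 1) < G (Z n ω) ∧ G (Z n ω) ≤ F x :=
    ae_all_iff.mpr fun k => key (1 / (k + 1)) (by positivity)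
  filter_upwards [key'] with ω hω
  rw [Metric.tendsto_atTop]
  intro ε hε
  obtain ⟨k, hk⟩ := exists_nat_one_div_lt hε
  obtain ⟨n, hn1, hn2⟩ := hω k
  refine ⟨n + 1, fun T hT => ?_⟩
  rw [hset]
  set s : Set ℝ := {u : ℝ | ∃ t < T, G (Z t ω) = u ∧ u ≤ F x} with hs
  have hmem : G (Z n ω) ∈ s := ⟨n, lt_of_lt_of_le (Nat.lt_succ_self n) hT, rfl, hn2⟩
  have hbdd : BddAbove s := ⟨F x, by rintro u ⟨t, _, rfl, hu⟩; exact hu⟩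
  have h1 : sSup s ≤ F x := csSup_le ⟨_, hmem⟩ (by rintro u ⟨t, _, rfl, hu⟩; exact hu)
  have h2 : G (Z n ω) ≤ sSup s := le_csSup hbdd hmem
  rw [Real.dist_eq, abs_lt]
  have hk' : (1 : ℝ) / (k + 1) < ε := by exact_mod_cast hk
  constructor <;> linarith
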